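/- Let A be a finite hypergroup with quantum dimensions d_x (Perron–Frobenius eigenvalues of left multiplication) and weights w_x := N_{x x̄}^e. Define the Haar element R := (Σ_x d_x x / w_x) / (Σ_x d_x² / w_x). Then R y = y R = d_y R for every basis element y; in particular R² = R. -/

import Mathlib

/-- A finite hypergroup: a finite basis set with involution `inv`, identity `e`,
and nonnegative real structure constants `N x y z` (the coefficient of `z` in
the product `x·y`) making ℝA an associative unital algebra, with the involution
an anti-automorphism, and with `N x y e ≠ 0` iff `y = inv x`. -/
structure Hypergroup (A : Type) [Fintype A] [DecidableEq A] where
  N : A → A → A → ℝ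
  e : A
  inv : A → A
  N_nonneg : ∀ x y z, 0 ≤ N x y z
  inv_inv : ∀ x, inv (inv x) = x
  one_mul : ∀ x z, N e x z = if z = x then 1 else 0
  mul_one : ∀ x z, N x e z = if z = x then 1 else 0
  assoc : ∀ x y z w, ∑ u, N x y u * N u z w = ∑ u, N y z u * N x u w
  inv_anti : ∀ x y z, N (inv y) (inv x) (inv z) = N x y z
  dual : ∀ x y, N x y e ≠ 0 ↔ y = inv x

namespace Hypergroup

variable {A : Type} [Fintype A] [DecidableEq A]

/-- The coefficient of a basis element `z` in the product `x₁ ⋯ xₙ` of a list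
of basis elements (the empty product being the identity `e`). -/
def coeff (H : Hypergroup A) : List A → A → ℝ
  | [], z => if z = H.e then 1 else 0
  | x :: l, z => ∑ y, H.coeff l y * H.N x y z

end Hypergroup

open Finset

private lemma hg_perron_exists {A : Type} [Fintype A] [Nonempty A]
    (P : A → A → ℝ) (hP : ∀ z a, 0 < P z a) :
    ∃ (v : A → ℝ) (t : ℝ), (∀ a, 0 < v a) ∧ 0 < t ∧ ∀ z, (∑ a, P z a * v a) = t * v z := by
  classical
  obtain ⟨⟨zm, am⟩, hm⟩ := Finite.exists_min (fun p : A × A => P p.1 p.2)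
  obtain ⟨⟨zM, aM⟩, hM⟩ := Finite.exists_max (fun p : A × A => P p.1 p.2)
  set pmin := P zm am with hpmin
  set pMax := P zM aM with hpMax
  have hpmin0 : 0 < pmin := hP _ _
  have hpMax0 : 0 < pMax := hP _ _
  have hminle : ∀ z a, pmin ≤ P z a := fun z a => hm (z, a)
  have hmaxle : ∀ z a, P z a ≤ pMax := fun z a => hM (z, a)
  set n : ℝ := (Fintype.card A : ℝ) with hn
  have hn0 : 0 < n := by
    rw [hn]
    exact_mod_cast Fintype.card_pos
  set Φ : (A → ℝ) → A → ℝ := fun c z => ∑ a, P z a * c a with hΦ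
  have hΦc : Continuous Φ := by
    apply continuous_pi
    intro z
    exact continuous_finset_sum _ fun a _ => continuous_const.mul (continuous_apply a)
  set K : Set (A → ℝ) := Φ '' stdSimplex ℝ A with hK
  have hKcomp : IsCompact K := (isCompact_stdSimplex ℝ A).image hΦc
  have hKlb : ∀ v ∈ K, ∀ z, pmin ≤ v z := by
    rintro v ⟨c, hc, rfl⟩ z
    calc pmin = pmin * ∑ a, c a := by rw [hc.2, mul_one]
      _ = ∑ a, pmin * c a := by rw [Finset.mul_sum]
      _ ≤ ∑ a, P z a * c a :=
          Finset.sum_le_sum fun a _ => mul_le_mul_of_nonneg_right (hminle z a) (hc.1 a)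
      _ = Φ c z := rfl
  have hKub : ∀ v ∈ K, ∀ z, v z ≤ pMax := by
    rintro v ⟨c, hc, rfl⟩ z
    calc Φ c z = ∑ a, P z a * c a := rfl
      _ ≤ ∑ a, pMax * c a :=
          Finset.sum_le_sum fun a _ => mul_le_mul_of_nonneg_right (hmaxle z a) (hc.1 a)
      _ = pMax * ∑ a, c a := by rw [Finset.mul_sum]
      _ = pMax := by rw [hc.2, mul_one]
  have hKpos : ∀ v ∈ K, ∀ z, 0 < v z := fun v hv z => lt_of_lt_of_le hpmin0 (hKlb v hv z)
  have hKfub : ∀ v ∈ K, ∀ z, Φ v z ≤ n * (pMax * pMax) := by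
    intro v hv z
    calc Φ v z = ∑ a, P z a * v a := rfl
      _ ≤ ∑ _a : A, pMax * pMax :=
          Finset.sum_le_sum fun a _ =>
            mul_le_mul (hmaxle z a) (hKub v hv a) (le_of_lt (hKpos v hv a)) hpMax0.le
      _ = n * (pMax * pMax) := by
          rw [Finset.sum_const, card_univ, nsmul_eq_mul, hn]
  set B : ℝ := n * (pMax * pMax) / pmin with hB
  have hBpos : 0 < B := by positivity
  have hfeas : ∀ v ∈ K, ∀ t : ℝ, (∀ z, t * v z ≤ Φ v z) → t ≤ B := by
    intro v hv t h
    obtain ⟨z⟩ := ‹Nonempty A›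
    rcases le_or_gt t 0 with h0 | h0
    · exact h0.trans hBpos.le
    · have h1 : t * pmin ≤ t * v z := mul_le_mul_of_nonneg_left (hKlb v hv z) h0.le
      have h2 : t * pmin ≤ n * (pMax * pMax) := le_trans h1 ((h z).trans (hKfub v hv z))
      rw [hB, le_div_iff₀ hpmin0]
      linarith
  set Λ : Set ((A → ℝ) × ℝ) :=
    {p | p.1 ∈ K ∧ p.2 ∈ Set.Icc (0:ℝ) (B + 1) ∧ ∀ z, p.2 * p.1 z ≤ Φ p.1 z} with hΛ
  have hΛclosed : IsClosed Λ := by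
    have h1 : Λ = (Prod.fst ⁻¹' K) ∩ ((Prod.snd ⁻¹' Set.Icc (0:ℝ) (B+1)) ∩
        ⋂ z, {p : (A → ℝ) × ℝ | p.2 * p.1 z ≤ Φ p.1 z}) := by
      ext p
      simp only [hΛ, Set.mem_setOf_eq, Set.mem_inter_iff, Set.mem_preimage, Set.mem_iInter]
    rw [h1]
    refine (hKcomp.isClosed.preimage continuous_fst).inter
      ((isClosed_Icc.preimage continuous_snd).inter (isClosed_iInter fun z => ?_))
    exact isClosed_le (continuous_snd.mul ((continuous_apply z).comp continuous_fst))
      ((continuous_apply z).comp (hΦc.comp continuous_fst))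
  have hΛcomp : IsCompact Λ := by
    refine (hKcomp.prod (isCompact_Icc (a := (0:ℝ)) (b := B+1))).of_isClosed_subset hΛclosed ?_
    intro p hp
    exact ⟨hp.1, hp.2.1⟩
  -- a nonempty feasible point
  set c₀ : A → ℝ := fun _ => n⁻¹ with hc₀def
  have hc₀ : c₀ ∈ stdSimplex ℝ A := by
    constructor
    · intro a
      simp only [hc₀def]
      positivity
    · simp only [hc₀def]
      rw [Finset.sum_const, card_univ, nsmul_eq_mul, ← hn, mul_inv_cancel₀ hn0.ne']
  set v₀ : A → ℝ := Φ c₀ with hv₀def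
  have hv₀K : v₀ ∈ K := ⟨c₀, hc₀, rfl⟩
  set t₀ : ℝ := n * (pmin * pmin) / pMax with ht₀def
  have ht₀pos : 0 < t₀ := by positivity
  have hfeas₀ : ∀ z, t₀ * v₀ z ≤ Φ v₀ z := by
    intro z
    have h1 : v₀ z ≤ pMax := hKub v₀ hv₀K z
    have h2 : n * (pmin * pmin) ≤ Φ v₀ z := by
      calc n * (pmin * pmin) = ∑ _a : A, pmin * pmin := by
            rw [Finset.sum_const, card_univ, nsmul_eq_mul, hn]
        _ ≤ ∑ a, P z a * v₀ a :=
            Finset.sum_le_sum fun a _ =>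
              mul_le_mul (hminle z a) (hKlb v₀ hv₀K a) hpmin0.le (hP z a).le
        _ = Φ v₀ z := rfl
    calc t₀ * v₀ z ≤ t₀ * pMax := mul_le_mul_of_nonneg_left h1 ht₀pos.le
      _ = n * (pmin * pmin) := by rw [ht₀def, div_mul_cancel₀ _ hpMax0.ne']
      _ ≤ Φ v₀ z := h2
  have ht₀B : t₀ ≤ B := hfeas v₀ hv₀K t₀ hfeas₀
  have hΛne : (v₀, t₀) ∈ Λ := ⟨hv₀K, ⟨ht₀pos.le, by linarith⟩, hfeas₀⟩
  obtain ⟨p, hpΛ, hpmax⟩ := hΛcomp.exists_isMaxOn ⟨_, hΛne⟩ continuous_snd.continuousOn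
  have hmax' : ∀ q ∈ Λ, q.2 ≤ p.2 := fun q hq => hpmax hq
  obtain ⟨hvK, hticc, hfe⟩ := hpΛ
  set v : A → ℝ := p.1 with hvdef
  set t : ℝ := p.2 with htdef
  have htpos : 0 < t := lt_of_lt_of_le ht₀pos (hmax' _ hΛne)
  refine ⟨v, t, fun a => hKpos v hvK a, htpos, ?_⟩
  by_contra hcon
  push_neg at hcon
  obtain ⟨z₁, hz₁⟩ := hcon
  have hlt : t * v z₁ < Φ v z₁ := lt_of_le_of_ne (hfe z₁) fun h => hz₁ h.symm
  set u : A → ℝ := fun z => Φ v z - t * v z with hu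
  have hu0 : ∀ z, 0 ≤ u z := fun z => sub_nonneg.mpr (hfe z)
  have hu₁ : 0 < u z₁ := sub_pos.mpr hlt
  set v' : A → ℝ := Φ v with hv'
  have hv'pos : ∀ z, 0 < v' z := fun z =>
    Finset.sum_pos (fun a _ => mul_pos (hP z a) (hKpos v hvK a)) Finset.univ_nonempty
  have hkey : ∀ z, t * v' z < Φ v' z := by
    intro z
    have e1 : Φ v' z = t * v' z + Φ u z := by
      have hsplit : ∀ a, v' a = t * v a + u a := fun a => by simp only [hu]; ring
      calc Φ v' z = ∑ a, P z a * (t * v a + u a) := by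
            exact Finset.sum_congr rfl fun a _ => by rw [hsplit a]
        _ = ∑ a, (t * (P z a * v a) + P z a * u a) :=
            Finset.sum_congr rfl fun a _ => by ring
        _ = t * (∑ a, P z a * v a) + ∑ a, P z a * u a := by
            rw [Finset.sum_add_distrib, Finset.mul_sum]
        _ = t * v' z + Φ u z := rfl
    have e2 : 0 < Φ u z :=
      lt_of_lt_of_le (mul_pos (hP z z₁) hu₁)
        (Finset.single_le_sum (f := fun a => P z a * u a)
          (fun a _ => mul_nonneg (hP z a).le (hu0 a)) (Finset.mem_univ z₁))
    linarith
  set s : ℝ := ∑ a, v a with hsdef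
  have hs : 0 < s := Finset.sum_pos (fun a _ => hKpos v hvK a) Finset.univ_nonempty
  have hc' : (fun a => v a / s) ∈ stdSimplex ℝ A := by
    constructor
    · intro a
      have := hKpos v hvK a
      positivity
    · rw [← Finset.sum_div, div_self hs.ne']
  have hv''K : (fun z => v' z / s) ∈ K := by
    refine ⟨fun a => v a / s, hc', funext fun z => ?_⟩
    simp only [hΦ, hv']
    rw [Finset.sum_div]
    exact Finset.sum_congr rfl fun a _ => (mul_div_assoc _ _ _).symm
  set t' : ℝ := Finset.univ.inf' Finset.univ_nonempty (fun z => Φ v' z / v' z) with ht'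
  have htt' : t < t' := by
    rw [ht', Finset.lt_inf'_iff]
    intro z _
    exact (lt_div_iff₀ (hv'pos z)).mpr (hkey z)
  have hfe' : ∀ z, t' * v' z ≤ Φ v' z := by
    intro z
    have h1 : t' ≤ Φ v' z / v' z := Finset.inf'_le _ (Finset.mem_univ z)
    calc t' * v' z ≤ (Φ v' z / v' z) * v' z := mul_le_mul_of_nonneg_right h1 (hv'pos z).le
      _ = Φ v' z := div_mul_cancel₀ _ (hv'pos z).ne'
  have htB : t ≤ B := hfeas v hvK t hfe
  set t'' : ℝ := min t' (B + 1) with ht''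
  have htt'' : t < t'' := lt_min htt' (by linarith)
  have hmem : ((fun z => v' z / s), t'') ∈ Λ := by
    refine ⟨hv''K, ⟨by linarith [hticc.1], min_le_right _ _⟩, ?_⟩
    intro z
    have hΦdiv : Φ (fun a => v' a / s) z = Φ v' z / s := by
      simp only [hΦ]
      rw [Finset.sum_div]
      exact Finset.sum_congr rfl fun a _ => (mul_div_assoc _ _ _).symm
    calc t'' * (v' z / s) ≤ t' * (v' z / s) :=
          mul_le_mul_of_nonneg_right (min_le_left _ _) (le_of_lt (div_pos (hv'pos z) hs))
      _ = (t' * v' z) / s := (mul_div_assoc _ _ _).symm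
      _ ≤ Φ v' z / s := by gcongr; exact hfe' z
      _ = Φ (fun a => v' a / s) z := hΦdiv.symm
  exact absurd (hmax' _ hmem) (not_le.mpr htt'')

private lemma hg_swap3 {A : Type} [Fintype A] (f : A → A → A → ℝ) :
    ∑ a, ∑ b, ∑ x, f a b x = ∑ x, ∑ b, ∑ a, f a b x := by
  calc ∑ a, ∑ b, ∑ x, f a b x = ∑ a, ∑ x, ∑ b, f a b x :=
        Finset.sum_congr rfl fun a _ => Finset.sum_comm
    _ = ∑ x, ∑ a, ∑ b, f a b x := Finset.sum_comm
    _ = ∑ x, ∑ b, ∑ a, f a b x := Finset.sum_congr rfl fun x _ => Finset.sum_comm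

private lemma hg_cycle3 {A : Type} [Fintype A] (f : A → A → A → ℝ) :
    ∑ a, ∑ x, ∑ b, f a x b = ∑ x, ∑ b, ∑ a, f a x b := by
  calc ∑ a, ∑ x, ∑ b, f a x b = ∑ x, ∑ a, ∑ b, f a x b := Finset.sum_comm
    _ = ∑ x, ∑ b, ∑ a, f a x b := Finset.sum_congr rfl fun x _ => Finset.sum_comm

private lemma hg_eigen_pair {A : Type} [Fintype A]
    (P : A → A → ℝ) (v u : A → ℝ) (t μ : ℝ)
    (hv : ∀ a, 0 < v a) (hu : ∀ a, 0 ≤ u a) (a₁ : A) (hu₁ : 0 < u a₁)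
    (hev : ∀ z, (∑ a, P z a * v a) = t * v z)
    (huev : ∀ z, (∑ a, P a z * u a) = μ * u z) : t = μ := by
  have h1 : ∑ z, u z * (∑ a, P z a * v a) = t * ∑ z, u z * v z := by
    simp only [hev]
    rw [Finset.mul_sum]
    exact Finset.sum_congr rfl fun z _ => by ring
  have h2 : ∑ z, u z * (∑ a, P z a * v a) = μ * ∑ z, u z * v z := by
    calc ∑ z, u z * (∑ a, P z a * v a) = ∑ z, ∑ a, u z * (P z a * v a) := by
          exact Finset.sum_congr rfl fun z _ => by rw [Finset.mul_sum]
      _ = ∑ a, ∑ z, u z * (P z a * v a) := Finset.sum_comm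
      _ = ∑ a, v a * (∑ z, P z a * u z) := by
          refine Finset.sum_congr rfl fun a _ => ?_
          rw [Finset.mul_sum]
          exact Finset.sum_congr rfl fun z _ => by ring
      _ = ∑ a, v a * (μ * u a) := by
          exact Finset.sum_congr rfl fun a _ => by rw [huev a]
      _ = μ * ∑ z, u z * v z := by
          rw [Finset.mul_sum]
          exact Finset.sum_congr rfl fun a _ => by ring
  have h3 : 0 < ∑ z, u z * v z :=
    lt_of_lt_of_le (mul_pos hu₁ (hv a₁))
      (Finset.single_le_sum (fun z _ => mul_nonneg (hu z) (hv z).le) (Finset.mem_univ a₁))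
  exact mul_right_cancel₀ h3.ne' (h1.symm.trans h2)

private lemma hg_perron_unique {A : Type} [Fintype A] [Nonempty A]
    (P : A → A → ℝ) (hP : ∀ z a, 0 < P z a)
    (v : A → ℝ) (t : ℝ) (hv : ∀ a, 0 < v a) (ht : 0 < t)
    (hev : ∀ z, (∑ a, P z a * v a) = t * v z)
    (u : A → ℝ) (hu : ∀ a, 0 ≤ u a)
    (huev : ∀ z, (∑ a, P z a * u a) = t * u z) :
    ∃ s : ℝ, ∀ a, u a = s * v a := by
  classical
  set s := Finset.univ.inf' Finset.univ_nonempty (fun a => u a / v a) with hs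
  refine ⟨s, ?_⟩
  set r : A → ℝ := fun a => u a - s * v a with hr
  have hr0 : ∀ a, 0 ≤ r a := by
    intro a
    have h1 : s ≤ u a / v a := Finset.inf'_le _ (Finset.mem_univ a)
    have h2 := (le_div_iff₀ (hv a)).mp h1
    simp only [hr]
    linarith
  obtain ⟨a₀, -, ha₀⟩ := Finset.exists_mem_eq_inf' (Finset.univ_nonempty) (fun a => u a / v a)
  have hra₀ : r a₀ = 0 := by
    simp only [hr, ← hs] at *
    rw [ha₀, div_mul_cancel₀ _ (hv a₀).ne']
    ring
  have hrev : ∀ z, (∑ a, P z a * r a) = t * r z := by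
    intro z
    have e1 : ∑ a, P z a * r a = (∑ a, P z a * u a) - s * (∑ a, P z a * v a) := by
      rw [Finset.mul_sum, ← Finset.sum_sub_distrib]
      exact Finset.sum_congr rfl fun a _ => by simp only [hr]; ring
    rw [e1, hev, huev]
    simp only [hr]
    ring
  have hzero : ∀ a, r a = 0 := by
    intro a
    by_contra hne
    have hra : 0 < r a := lt_of_le_of_ne (hr0 a) (Ne.symm hne)
    have h2 : 0 < ∑ b, P a₀ b * r b :=
      lt_of_lt_of_le (mul_pos (hP a₀ a) hra)
        (Finset.single_le_sum (fun b _ => mul_nonneg (hP a₀ b).le (hr0 b)) (Finset.mem_univ a))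
    rw [hrev a₀, hra₀, mul_zero] at h2
    exact lt_irrefl _ h2
  intro a
  have := hzero a
  simp only [hr] at this
  linarith

/-- left mult by the full sum commutes with right mult by `y`. -/
private lemma hg_comm_right {A : Type} [Fintype A] [DecidableEq A] (H : Hypergroup A)
    (y : A) (c : A → ℝ) (z : A) :
    (∑ a, (∑ x, H.N x a z) * (∑ b, H.N b y a * c b))
      = ∑ a, H.N a y z * (∑ b, (∑ x, H.N x b a) * c b) := by
  have l1 : (∑ a, (∑ x, H.N x a z) * (∑ b, H.N b y a * c b))
      = ∑ a, ∑ x, ∑ b, H.N b y a * H.N x a z * c b := by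
    refine Finset.sum_congr rfl fun a _ => ?_
    rw [Finset.sum_mul]
    refine Finset.sum_congr rfl fun x _ => ?_
    rw [Finset.mul_sum]
    exact Finset.sum_congr rfl fun b _ => by ring
  have l2 : (∑ a, H.N a y z * (∑ b, (∑ x, H.N x b a) * c b))
      = ∑ a, ∑ b, ∑ x, H.N x b a * H.N a y z * c b := by
    refine Finset.sum_congr rfl fun a _ => ?_
    rw [Finset.mul_sum]
    refine Finset.sum_congr rfl fun b _ => ?_
    rw [Finset.sum_mul, Finset.mul_sum]
    exact Finset.sum_congr rfl fun x _ => by ring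
  rw [l1, l2, hg_cycle3, hg_swap3 (fun a b x => H.N x b a * H.N a y z * c b)]
  refine Finset.sum_congr rfl fun x _ => Finset.sum_congr rfl fun b _ => ?_
  rw [← Finset.sum_mul, ← Finset.sum_mul]
  congr 1
  exact (H.assoc x b y z).symm

/-- right mult by the full sum commutes with left mult by `y`. -/
private lemma hg_comm_left {A : Type} [Fintype A] [DecidableEq A] (H : Hypergroup A)
    (y : A) (c : A → ℝ) (z : A) :
    (∑ a, (∑ x, H.N a x z) * (∑ b, H.N y b a * c b))
      = ∑ a, H.N y a z * (∑ b, (∑ x, H.N b x a) * c b) := by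
  have l1 : (∑ a, (∑ x, H.N a x z) * (∑ b, H.N y b a * c b))
      = ∑ a, ∑ x, ∑ b, H.N y b a * H.N a x z * c b := by
    refine Finset.sum_congr rfl fun a _ => ?_
    rw [Finset.sum_mul]
    refine Finset.sum_congr rfl fun x _ => ?_
    rw [Finset.mul_sum]
    exact Finset.sum_congr rfl fun b _ => by ring
  have l2 : (∑ a, H.N y a z * (∑ b, (∑ x, H.N b x a) * c b))
      = ∑ a, ∑ b, ∑ x, H.N b x a * H.N y a z * c b := by
    refine Finset.sum_congr rfl fun a _ => ?_
    rw [Finset.mul_sum]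
    refine Finset.sum_congr rfl fun b _ => ?_
    rw [Finset.sum_mul, Finset.mul_sum]
    exact Finset.sum_congr rfl fun x _ => by ring
  rw [l1, l2, hg_cycle3, hg_swap3 (fun a b x => H.N b x a * H.N y a z * c b)]
  refine Finset.sum_congr rfl fun x _ => Finset.sum_congr rfl fun b _ => ?_
  rw [← Finset.sum_mul, ← Finset.sum_mul]
  congr 1
  exact H.assoc y b x z

open Finset in
/-- The Haar element R := (Σ_x d_x x / w_x)/(Σ_x d_x²/w_x) satisfies
R y = y R = d_y R for every basis element y, and R² = R. -/
theorem stmt_14 {A : Type} [Fintype A] [DecidableEq A] (H : Hypergroup A)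
    (d : A → ℝ)
    (hd : ∀ x, ∃ v : A → ℝ, (∀ a, 0 < v a) ∧
      ∀ z, (∑ y, H.N x y z * v y) = d x * v z) :
    let w : A → ℝ := fun x => H.N x (H.inv x) H.e
    let R : A → ℝ := fun x => (d x / w x) / (∑ a, d a ^ 2 / w a)
    ∀ y z, (∑ x, R x * H.N x y z) = d y * R z ∧
      (∑ x, R x * H.N y x z) = d y * R z ∧
      (∑ x, ∑ x', R x * R x' * H.N x x' z) = R z := by
  classical
  haveI hA : Nonempty A := ⟨H.e⟩
  intro w R
  have hwdef : w = fun x => H.N x (H.inv x) H.e := rfl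
  have hRdef : R = fun x => (d x / w x) / (∑ a, d a ^ 2 / w a) := rfl
  -- positivity of weights
  have hw : ∀ x, 0 < w x := by
    intro x
    have h1 : H.N x (H.inv x) H.e ≠ 0 := (H.dual x (H.inv x)).mpr rfl
    have h2 : 0 ≤ H.N x (H.inv x) H.e := H.N_nonneg _ _ _
    rw [hwdef]
    exact lt_of_le_of_ne h2 (Ne.symm h1)
  have hwinv : ∀ a, 0 < H.N (H.inv a) a H.e := by
    intro a
    have h1 : H.N (H.inv a) a H.e ≠ 0 := (H.dual (H.inv a) a).mpr (H.inv_inv a).symm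
    exact lt_of_le_of_ne (H.N_nonneg _ _ _) (Ne.symm h1)
  -- the two strictly positive "total multiplication" matrices
  set T : A → A → ℝ := fun z a => ∑ x, H.N x a z with hTdef
  set T' : A → A → ℝ := fun z a => ∑ x, H.N a x z with hT'def
  have hNee : ∀ z, H.N z H.e z = 1 := fun z => by rw [H.mul_one z z, if_pos rfl]
  have hNee' : ∀ z, H.N H.e z z = 1 := fun z => by rw [H.one_mul z z, if_pos rfl]
  have hT : ∀ z a, 0 < T z a := by
    intro z a
    have h1 : (0:ℝ) < ∑ u, H.N (H.inv a) a u * H.N z u z := by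
      refine lt_of_lt_of_le ?_ (Finset.single_le_sum
        (f := fun u => H.N (H.inv a) a u * H.N z u z)
        (fun u _ => mul_nonneg (H.N_nonneg _ _ _) (H.N_nonneg _ _ _)) (Finset.mem_univ H.e))
      show 0 < H.N (H.inv a) a H.e * H.N z H.e z
      rw [hNee z, mul_one]
      exact hwinv a
    rw [← H.assoc z (H.inv a) a z] at h1
    obtain ⟨u, hu⟩ : ∃ u, 0 < H.N z (H.inv a) u * H.N u a z := by
      by_contra hc
      push_neg at hc
      have : ∑ u, H.N z (H.inv a) u * H.N u a z ≤ 0 := Finset.sum_nonpos fun u _ => hc u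
      linarith
    have h2 : 0 < H.N u a z := by
      rcases mul_pos_iff.mp hu with ⟨_, h⟩ | ⟨h, _⟩
      · exact h
      · exact absurd (H.N_nonneg z (H.inv a) u) (not_le.mpr h)
    refine lt_of_lt_of_le h2 (Finset.single_le_sum
      (f := fun x => H.N x a z) (fun x _ => H.N_nonneg _ _ _) (Finset.mem_univ u))
  have hT' : ∀ z a, 0 < T' z a := by
    intro z a
    have h1 : (0:ℝ) < ∑ u, H.N a (H.inv a) u * H.N u z z := by
      refine lt_of_lt_of_le ?_ (Finset.single_le_sum
        (f := fun u => H.N a (H.inv a) u * H.N u z z)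
        (fun u _ => mul_nonneg (H.N_nonneg _ _ _) (H.N_nonneg _ _ _)) (Finset.mem_univ H.e))
      show 0 < H.N a (H.inv a) H.e * H.N H.e z z
      rw [hNee' z, mul_one]
      exact hw a
    rw [H.assoc a (H.inv a) z z] at h1
    obtain ⟨u, hu⟩ : ∃ u, 0 < H.N (H.inv a) z u * H.N a u z := by
      by_contra hc
      push_neg at hc
      have : ∑ u, H.N (H.inv a) z u * H.N a u z ≤ 0 := Finset.sum_nonpos fun u _ => hc u
      linarith
    have h2 : 0 < H.N a u z := by
      rcases mul_pos_iff.mp hu with ⟨_, h⟩ | ⟨h, _⟩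
      · exact h
      · exact absurd (H.N_nonneg (H.inv a) z u) (not_le.mpr h)
    refine lt_of_lt_of_le h2 (Finset.single_le_sum
      (f := fun x => H.N a x z) (fun x _ => H.N_nonneg _ _ _) (Finset.mem_univ u))
  -- Perron data
  obtain ⟨v₁, t₁, hv₁pos, ht₁, hv₁⟩ := hg_perron_exists T hT
  obtain ⟨v₂, t₂, hv₂pos, ht₂, hv₂⟩ := hg_perron_exists T' hT'
  obtain ⟨v₃, t₃, hv₃pos, ht₃, hv₃⟩ := hg_perron_exists (fun z a => T a z) (fun z a => hT a z)
  -- v₁ is a common eigenvector of all right multiplications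
  have hRy : ∀ y, ∃ s : ℝ, ∀ z, (∑ a, H.N a y z * v₁ a) = s * v₁ z := by
    intro y
    apply hg_perron_unique T hT v₁ t₁ hv₁pos ht₁ hv₁ (fun z => ∑ a, H.N a y z * v₁ a)
      (fun z => Finset.sum_nonneg fun a _ => mul_nonneg (H.N_nonneg a y z) (hv₁pos a).le)
    intro z
    show (∑ a, (∑ x, H.N x a z) * (∑ b, H.N b y a * v₁ b))
        = t₁ * (∑ a, H.N a y z * v₁ a)
    rw [hg_comm_right H y v₁ z]
    have hstep : ∀ a, (∑ b, (∑ x, H.N x b a) * v₁ b) = t₁ * v₁ a := fun a => hv₁ a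
    calc ∑ a, H.N a y z * (∑ b, (∑ x, H.N x b a) * v₁ b)
        = ∑ a, H.N a y z * (t₁ * v₁ a) :=
          Finset.sum_congr rfl fun a _ => by rw [hstep a]
      _ = t₁ * ∑ a, H.N a y z * v₁ a := by
          rw [Finset.mul_sum]
          exact Finset.sum_congr rfl fun a _ => by ring
  choose c hc using hRy
  have hcpos : ∀ y, 0 < c y := by
    intro y
    have h1 : v₁ H.e ≤ ∑ a, H.N a y y * v₁ a := by
      refine le_trans ?_ (Finset.single_le_sum (f := fun a => H.N a y y * v₁ a)
        (fun a _ => mul_nonneg (H.N_nonneg _ _ _) (hv₁pos a).le) (Finset.mem_univ H.e))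
      show v₁ H.e ≤ H.N H.e y y * v₁ H.e
      rw [hNee' y, one_mul]
    rw [hc y y] at h1
    nlinarith [hv₁pos H.e, hv₁pos y]
  -- character property of c
  have hchar : ∀ p q, (∑ u, H.N p q u * c u) = c p * c q := by
    intro p q
    have key : (∑ u, H.N p q u * c u) * v₁ H.e = (c p * c q) * v₁ H.e := by
      calc (∑ u, H.N p q u * c u) * v₁ H.e
          = ∑ u, H.N p q u * (c u * v₁ H.e) := by
            rw [Finset.sum_mul]; exact Finset.sum_congr rfl fun u _ => by ring
        _ = ∑ u, H.N p q u * (∑ b, H.N b u H.e * v₁ b) :=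
            Finset.sum_congr rfl fun u _ => by rw [hc u H.e]
        _ = ∑ u, ∑ b, H.N p q u * H.N b u H.e * v₁ b :=
            Finset.sum_congr rfl fun u _ => by
              rw [Finset.mul_sum]; exact Finset.sum_congr rfl fun b _ => by ring
        _ = ∑ b, ∑ u, H.N p q u * H.N b u H.e * v₁ b := Finset.sum_comm
        _ = ∑ b, (∑ u, H.N p q u * H.N b u H.e) * v₁ b :=
            Finset.sum_congr rfl fun b _ => by rw [Finset.sum_mul]
        _ = ∑ b, (∑ u, H.N b p u * H.N u q H.e) * v₁ b :=
            Finset.sum_congr rfl fun b _ => by rw [H.assoc b p q H.e]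
        _ = ∑ b, ∑ u, H.N u q H.e * (H.N b p u * v₁ b) :=
            Finset.sum_congr rfl fun b _ => by
              rw [Finset.sum_mul]; exact Finset.sum_congr rfl fun u _ => by ring
        _ = ∑ u, ∑ b, H.N u q H.e * (H.N b p u * v₁ b) := Finset.sum_comm
        _ = ∑ u, H.N u q H.e * (∑ b, H.N b p u * v₁ b) :=
            Finset.sum_congr rfl fun u _ => by rw [Finset.mul_sum]
        _ = ∑ u, H.N u q H.e * (c p * v₁ u) :=
            Finset.sum_congr rfl fun u _ => by rw [hc p u]
        _ = c p * ∑ u, H.N u q H.e * v₁ u := by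
            rw [Finset.mul_sum]; exact Finset.sum_congr rfl fun u _ => by ring
        _ = c p * (c q * v₁ H.e) := by rw [hc q H.e]
        _ = (c p * c q) * v₁ H.e := by ring
    exact mul_right_cancel₀ (hv₁pos H.e).ne' key
  -- identification of characters with d
  have hident : ∀ g : A → ℝ, (∀ a, 0 < g a) →
      (∀ p q, (∑ u, H.N p q u * g u) = g p * g q) → ∀ y, g y = d y := by
    intro g hgpos hch y
    obtain ⟨vy, hvyp, hvye⟩ := hd y
    have hSpos : 0 < ∑ a, g a * vy a :=
      Finset.sum_pos (fun a _ => mul_pos (hgpos a) (hvyp a)) Finset.univ_nonempty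
    have h1 : ∑ z, g z * (∑ a, H.N y a z * vy a) = d y * ∑ z, g z * vy z := by
      calc ∑ z, g z * (∑ a, H.N y a z * vy a) = ∑ z, g z * (d y * vy z) :=
            Finset.sum_congr rfl fun z _ => by rw [hvye z]
        _ = d y * ∑ z, g z * vy z := by
            rw [Finset.mul_sum]; exact Finset.sum_congr rfl fun z _ => by ring
    have h2 : ∑ z, g z * (∑ a, H.N y a z * vy a) = g y * ∑ z, g z * vy z := by
      calc ∑ z, g z * (∑ a, H.N y a z * vy a)
          = ∑ z, ∑ a, H.N y a z * g z * vy a :=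
            Finset.sum_congr rfl fun z _ => by
              rw [Finset.mul_sum]; exact Finset.sum_congr rfl fun a _ => by ring
        _ = ∑ a, ∑ z, H.N y a z * g z * vy a := Finset.sum_comm
        _ = ∑ a, (∑ z, H.N y a z * g z) * vy a :=
            Finset.sum_congr rfl fun a _ => by rw [Finset.sum_mul]
        _ = ∑ a, (g y * g a) * vy a :=
            Finset.sum_congr rfl fun a _ => by rw [hch y a]
        _ = g y * ∑ z, g z * vy z := by
            rw [Finset.mul_sum]; exact Finset.sum_congr rfl fun a _ => by ring
    exact mul_right_cancel₀ hSpos.ne' (h2.symm.trans h1)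
  have hcd : ∀ y, c y = d y := hident c hcpos hchar
  have hdpos : ∀ y, 0 < d y := fun y => hcd y ▸ hcpos y
  -- d is invariant under the involution: d ∘ inv is also a positive character
  have hdchar : ∀ p q, (∑ u, H.N p q u * d u) = d p * d q := by
    intro p q
    have h := hchar p q
    simp only [hcd] at h
    exact h
  have hdinv : ∀ y, d (H.inv y) = d y := by
    have hinvol : Function.Involutive H.inv := H.inv_inv
    have hgchar : ∀ p q, (∑ u, H.N p q u * d (H.inv u)) = d (H.inv p) * d (H.inv q) := by
      intro p q
      calc ∑ u, H.N p q u * d (H.inv u)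
          = ∑ u, H.N (H.inv q) (H.inv p) (H.inv u) * d (H.inv u) :=
            Finset.sum_congr rfl fun u _ => by rw [H.inv_anti p q u]
        _ = ∑ u, H.N (H.inv q) (H.inv p) u * d u :=
            Fintype.sum_bijective H.inv hinvol.bijective _ _ (fun u => rfl)
        _ = d (H.inv q) * d (H.inv p) := hdchar _ _
        _ = d (H.inv p) * d (H.inv q) := by ring
    exact hident (fun u => d (H.inv u)) (fun u => hdpos _) hgchar
  have hR1 : ∀ y z, (∑ a, H.N a y z * v₁ a) = d y * v₁ z := fun y z => by
    rw [hc y z, hcd y]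
  -- v₂ is a common eigenvector of all left multiplications
  have hLy : ∀ y, ∃ s : ℝ, ∀ z, (∑ a, H.N y a z * v₂ a) = s * v₂ z := by
    intro y
    apply hg_perron_unique T' hT' v₂ t₂ hv₂pos ht₂ hv₂ (fun z => ∑ a, H.N y a z * v₂ a)
      (fun z => Finset.sum_nonneg fun a _ => mul_nonneg (H.N_nonneg y a z) (hv₂pos a).le)
    intro z
    show (∑ a, (∑ x, H.N a x z) * (∑ b, H.N y b a * v₂ b))
        = t₂ * (∑ a, H.N y a z * v₂ a)
    rw [hg_comm_left H y v₂ z]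
    have hstep : ∀ a, (∑ b, (∑ x, H.N b x a) * v₂ b) = t₂ * v₂ a := fun a => hv₂ a
    calc ∑ a, H.N y a z * (∑ b, (∑ x, H.N b x a) * v₂ b)
        = ∑ a, H.N y a z * (t₂ * v₂ a) :=
          Finset.sum_congr rfl fun a _ => by rw [hstep a]
      _ = t₂ * ∑ a, H.N y a z * v₂ a := by
          rw [Finset.mul_sum]
          exact Finset.sum_congr rfl fun a _ => by ring
  choose c' hc' using hLy
  have hc'pos : ∀ y, 0 < c' y := by
    intro y
    have h1 : v₂ H.e ≤ ∑ a, H.N y a y * v₂ a := by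
      refine le_trans ?_ (Finset.single_le_sum (f := fun a => H.N y a y * v₂ a)
        (fun a _ => mul_nonneg (H.N_nonneg _ _ _) (hv₂pos a).le) (Finset.mem_univ H.e))
      show v₂ H.e ≤ H.N y H.e y * v₂ H.e
      rw [hNee y, one_mul]
    rw [hc' y y] at h1
    nlinarith [hv₂pos H.e, hv₂pos y]
  have hchar' : ∀ p q, (∑ u, H.N p q u * c' u) = c' p * c' q := by
    intro p q
    have key : (∑ u, H.N p q u * c' u) * v₂ H.e = (c' p * c' q) * v₂ H.e := by
      calc (∑ u, H.N p q u * c' u) * v₂ H.e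
          = ∑ u, H.N p q u * (c' u * v₂ H.e) := by
            rw [Finset.sum_mul]; exact Finset.sum_congr rfl fun u _ => by ring
        _ = ∑ u, H.N p q u * (∑ b, H.N u b H.e * v₂ b) :=
            Finset.sum_congr rfl fun u _ => by rw [hc' u H.e]
        _ = ∑ u, ∑ b, H.N p q u * H.N u b H.e * v₂ b :=
            Finset.sum_congr rfl fun u _ => by
              rw [Finset.mul_sum]; exact Finset.sum_congr rfl fun b _ => by ring
        _ = ∑ b, ∑ u, H.N p q u * H.N u b H.e * v₂ b := Finset.sum_comm
        _ = ∑ b, (∑ u, H.N p q u * H.N u b H.e) * v₂ b :=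
            Finset.sum_congr rfl fun b _ => by rw [Finset.sum_mul]
        _ = ∑ b, (∑ u, H.N q b u * H.N p u H.e) * v₂ b :=
            Finset.sum_congr rfl fun b _ => by rw [H.assoc p q b H.e]
        _ = ∑ b, ∑ u, H.N p u H.e * (H.N q b u * v₂ b) :=
            Finset.sum_congr rfl fun b _ => by
              rw [Finset.sum_mul]; exact Finset.sum_congr rfl fun u _ => by ring
        _ = ∑ u, ∑ b, H.N p u H.e * (H.N q b u * v₂ b) := Finset.sum_comm
        _ = ∑ u, H.N p u H.e * (∑ b, H.N q b u * v₂ b) :=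
            Finset.sum_congr rfl fun u _ => by rw [Finset.mul_sum]
        _ = ∑ u, H.N p u H.e * (c' q * v₂ u) :=
            Finset.sum_congr rfl fun u _ => by rw [hc' q u]
        _ = c' q * ∑ u, H.N p u H.e * v₂ u := by
            rw [Finset.mul_sum]; exact Finset.sum_congr rfl fun u _ => by ring
        _ = c' q * (c' p * v₂ H.e) := by rw [hc' p H.e]
        _ = (c' p * c' q) * v₂ H.e := by ring
    exact mul_right_cancel₀ (hv₂pos H.e).ne' key
  have hc'd : ∀ y, c' y = d y := hident c' hc'pos hchar'
  have hL₂ : ∀ y z, (∑ a, H.N y a z * v₂ a) = d y * v₂ z := fun y z => by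
    rw [hc' y z, hc'd y]
  -- v₂ is proportional to v₁
  have hsumd : ∀ z, (∑ a, T z a * v₂ a) = (∑ x, d x) * v₂ z := by
    intro z
    calc ∑ a, T z a * v₂ a = ∑ a, ∑ x, H.N x a z * v₂ a := by
          exact Finset.sum_congr rfl fun a _ => by rw [Finset.sum_mul]
      _ = ∑ x, ∑ a, H.N x a z * v₂ a := Finset.sum_comm
      _ = ∑ x, d x * v₂ z := Finset.sum_congr rfl fun x _ => hL₂ x z
      _ = (∑ x, d x) * v₂ z := (Finset.sum_mul _ _ _).symm
  have ht₁₃ : t₁ = t₃ :=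
    hg_eigen_pair T v₁ v₃ t₁ t₃ hv₁pos (fun a => (hv₃pos a).le) H.e (hv₃pos H.e) hv₁
      (fun z => hv₃ z)
  have hd₃ : (∑ x, d x) = t₃ :=
    hg_eigen_pair T v₂ v₃ (∑ x, d x) t₃ hv₂pos (fun a => (hv₃pos a).le) H.e (hv₃pos H.e)
      hsumd (fun z => hv₃ z)
  have hv₂T : ∀ z, (∑ a, T z a * v₂ a) = t₁ * v₂ z := by
    intro z
    rw [hsumd z, hd₃, ht₁₃]
  obtain ⟨s, hs⟩ := hg_perron_unique T hT v₁ t₁ hv₁pos ht₁ hv₁ v₂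
    (fun a => (hv₂pos a).le) hv₂T
  have hspos : 0 < s := by
    have h := hs H.e
    nlinarith [hv₂pos H.e, hv₁pos H.e]
  have hL1 : ∀ y z, (∑ a, H.N y a z * v₁ a) = d y * v₁ z := by
    intro y z
    have h := hL₂ y z
    simp only [hs] at h
    have h2 : s * (∑ a, H.N y a z * v₁ a) = s * (d y * v₁ z) := by
      calc s * ∑ a, H.N y a z * v₁ a = ∑ a, H.N y a z * (s * v₁ a) := by
            rw [Finset.mul_sum]; exact Finset.sum_congr rfl fun a _ => by ring
        _ = d y * (s * v₁ z) := h
        _ = s * (d y * v₁ z) := by ring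
    exact mul_left_cancel₀ hspos.ne' h2
  -- v₁ is proportional to the Haar weights d/w
  have hsum_e : ∀ b, (∑ a, H.N a b H.e * v₁ a) = H.N (H.inv b) b H.e * v₁ (H.inv b) := by
    intro b
    apply Finset.sum_eq_single (H.inv b)
    · intro x _ hx
      have h0 : H.N x b H.e = 0 := by
        by_contra h0
        have hbx := (H.dual x b).mp h0
        apply hx
        rw [hbx, H.inv_inv]
      rw [h0, zero_mul]
    · intro h
      exact absurd (Finset.mem_univ _) h
  have hv1w : ∀ a, w a * v₁ a = d a * v₁ H.e := by
    intro a
    have h := hR1 (H.inv a) H.e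
    rw [hsum_e (H.inv a), H.inv_inv, hdinv] at h
    rw [hwdef]
    exact h
  have hv1x : ∀ x, v₁ x = d x * v₁ H.e / w x := by
    intro x
    rw [eq_div_iff (hw x).ne']
    linarith [hv1w x]
  -- assembling the final statements
  have hWpos : 0 < ∑ a, d a ^ 2 / w a :=
    Finset.sum_pos (fun a _ => div_pos (pow_pos (hdpos a) 2) (hw a)) Finset.univ_nonempty
  have hRv : ∀ x, R x = v₁ x / (v₁ H.e * (∑ a, d a ^ 2 / w a)) := by
    intro x
    have h1 := (hw x).ne'
    have h2 := hWpos.ne'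
    have h3 := (hv₁pos H.e).ne'
    rw [hRdef, hv1x x]
    field_simp
  have g1 : ∀ y z, (∑ x, R x * H.N x y z) = d y * R z := by
    intro y z
    calc ∑ x, R x * H.N x y z
        = ∑ x, (v₁ x / (v₁ H.e * (∑ a, d a ^ 2 / w a))) * H.N x y z :=
          Finset.sum_congr rfl fun x _ => by rw [hRv x]
      _ = (∑ x, H.N x y z * v₁ x) / (v₁ H.e * (∑ a, d a ^ 2 / w a)) := by
          rw [Finset.sum_div]
          exact Finset.sum_congr rfl fun x _ => by ring
      _ = (d y * v₁ z) / (v₁ H.e * (∑ a, d a ^ 2 / w a)) := by rw [hR1 y z]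
      _ = d y * R z := by rw [hRv z]; ring
  have g2 : ∀ y z, (∑ x, R x * H.N y x z) = d y * R z := by
    intro y z
    calc ∑ x, R x * H.N y x z
        = ∑ x, (v₁ x / (v₁ H.e * (∑ a, d a ^ 2 / w a))) * H.N y x z :=
          Finset.sum_congr rfl fun x _ => by rw [hRv x]
      _ = (∑ x, H.N y x z * v₁ x) / (v₁ H.e * (∑ a, d a ^ 2 / w a)) := by
          rw [Finset.sum_div]
          exact Finset.sum_congr rfl fun x _ => by ring
      _ = (d y * v₁ z) / (v₁ H.e * (∑ a, d a ^ 2 / w a)) := by rw [hL1 y z]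
      _ = d y * R z := by rw [hRv z]; ring
  have hRd1 : (∑ x', R x' * d x') = 1 := by
    have hterm : ∀ x', R x' * d x' = (d x' ^ 2 / w x') / (∑ a, d a ^ 2 / w a) := by
      intro x'
      rw [hRdef]
      ring
    calc ∑ x', R x' * d x' = ∑ x', (d x' ^ 2 / w x') / (∑ a, d a ^ 2 / w a) :=
          Finset.sum_congr rfl fun x' _ => hterm x'
      _ = (∑ x', d x' ^ 2 / w x') / (∑ a, d a ^ 2 / w a) := by rw [Finset.sum_div]
      _ = 1 := div_self hWpos.ne'
  have g3 : ∀ z, (∑ x, ∑ x', R x * R x' * H.N x x' z) = R z := by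
    intro z
    calc ∑ x, ∑ x', R x * R x' * H.N x x' z
        = ∑ x', ∑ x, R x * R x' * H.N x x' z := Finset.sum_comm
      _ = ∑ x', R x' * (∑ x, R x * H.N x x' z) := by
          refine Finset.sum_congr rfl fun x' _ => ?_
          rw [Finset.mul_sum]
          exact Finset.sum_congr rfl fun x _ => by ring
      _ = ∑ x', R x' * (d x' * R z) :=
          Finset.sum_congr rfl fun x' _ => by rw [g1 x' z]
      _ = (∑ x', R x' * d x') * R z := by
          rw [Finset.sum_mul]
          exact Finset.sum_congr rfl fun x' _ => by ring
      _ = R z := by rw [hRd1, one_mul]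
  intro y z
  exact ⟨g1 y z, g2 y z, g3 z⟩
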